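/- arXiv:1912.04215 — 3 statements merged into one kernel-verified Lean document; each statement's English description precedes it below -/
import Mathlib

section
/- The transform G is continuously differentiable on ℝ and its derivative satisfies G'(x) > 0 for every x ∈ ℝ. -/
/-- The bump function `φ(u) = (1+u)^3 (1-u)^3` for `|u| ≤ 1` and `φ(u) = 0` otherwise. -/
noncomputable def bumpPhi (u : ℝ) : ℝ := if |u| ≤ 1 then (1 + u) ^ 3 * (1 - u) ^ 3 else 0

/-- The transform `G(x) = x + ∑ k, α k * φ((x - ζ k)/c) * (x - ζ k) * |x - ζ k|`. -/
noncomputable def Gtransform (m : ℕ) (ζ α : Fin m → ℝ) (c : ℝ) (x : ℝ) : ℝ :=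
  x + ∑ k : Fin m, α k * bumpPhi ((x - ζ k) / c) * ((x - ζ k) * |x - ζ k|)

lemma bumpPhi_eq (u : ℝ) : bumpPhi u = max (1 - u ^ 2) 0 ^ 3 := by
  unfold bumpPhi
  split_ifs with h
  · have h2 : u ^ 2 ≤ 1 := by
      have := abs_le.mp h
      nlinarith
    rw [max_eq_left (by linarith)]
    ring
  · push_neg at h
    have h2 : 1 < u ^ 2 := by
      nlinarith [le_abs_self u, neg_abs_le u, sq_abs u]
    rw [max_eq_right (by linarith)]
    ring

lemma hasDerivAt_maxcube (x : ℝ) :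
    HasDerivAt (fun y : ℝ => max y 0 ^ 3) (3 * max x 0 ^ 2) x := by
  rcases lt_trichotomy x 0 with hx | hx | hx
  · rw [max_eq_right hx.le]
    have h0 : HasDerivAt (fun _ : ℝ => (0:ℝ)) (3 * (0:ℝ) ^ 2) x := by
      simpa using hasDerivAt_const x (0:ℝ)
    refine h0.congr_of_eventuallyEq ?_
    filter_upwards [Iio_mem_nhds hx] with y hy
    rw [max_eq_right (Set.mem_Iio.mp hy).le]
    norm_num
  · subst hx
    rw [hasDerivAt_iff_tendsto_slope]
    rw [show (3:ℝ) * max (0:ℝ) 0 ^ 2 = 0 by simp]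
    have hb : ∀ᶠ y in nhdsWithin (0:ℝ) {(0:ℝ)}ᶜ,
        ‖slope (fun y : ℝ => max y 0 ^ 3) 0 y‖ ≤ y ^ 2 := by
      filter_upwards [self_mem_nhdsWithin] with y hy
      have hy' : y ≠ 0 := hy
      rcases le_or_gt y 0 with h | h
      · rw [slope_def_field, max_eq_right h]
        simp only [max_eq_right (le_refl (0:ℝ))]
        norm_num
        positivity
      · rw [slope_def_field, max_eq_left h.le]
        simp only [max_eq_right (le_refl (0:ℝ))]
        rw [show (0:ℝ)^3 = 0 by norm_num, sub_zero, sub_zero,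
          show y ^ 3 = y ^ 2 * y by ring, mul_div_cancel_right₀ _ hy',
          Real.norm_eq_abs, abs_of_nonneg (sq_nonneg y)]
    refine squeeze_zero_norm' hb ?_
    have : Filter.Tendsto (fun y : ℝ => y ^ 2) (nhds 0) (nhds 0) := by
      simpa using (continuous_pow 2).tendsto (0:ℝ)
    exact this.mono_left nhdsWithin_le_nhds
  · rw [max_eq_left hx.le]
    have h0 : HasDerivAt (fun y : ℝ => y ^ 3) (3 * x ^ 2) x := by
      simpa using hasDerivAt_pow 3 x
    refine h0.congr_of_eventuallyEq ?_
    filter_upwards [Ioi_mem_nhds hx] with y hy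
    rw [max_eq_left (Set.mem_Ioi.mp hy).le]

lemma hasDerivAt_mulabs (t : ℝ) :
    HasDerivAt (fun s : ℝ => s * |s|) (2 * |t|) t := by
  rcases lt_trichotomy t 0 with ht | ht | ht
  · have h0 : HasDerivAt (fun s : ℝ => -(s ^ 2)) (2 * |t|) t := by
      have h1 := (hasDerivAt_pow 2 t).neg
      refine h1.congr_deriv ?_
      rw [abs_of_neg ht]
      push_cast
      ring
    refine h0.congr_of_eventuallyEq ?_
    filter_upwards [Iio_mem_nhds ht] with y hy
    rw [abs_of_neg (Set.mem_Iio.mp hy)]; ring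
  · subst ht
    rw [hasDerivAt_iff_tendsto_slope]
    rw [show (2:ℝ) * |(0:ℝ)| = 0 by simp]
    have hb : ∀ᶠ y in nhdsWithin (0:ℝ) {(0:ℝ)}ᶜ,
        ‖slope (fun s : ℝ => s * |s|) 0 y‖ ≤ |y| := by
      filter_upwards [self_mem_nhdsWithin] with y hy
      have hy' : y ≠ 0 := hy
      rw [slope_def_field]
      simp only [abs_zero, mul_zero, zero_mul, sub_zero]
      rw [mul_comm, mul_div_assoc, div_self hy', mul_one, Real.norm_eq_abs, abs_abs]
    refine squeeze_zero_norm' hb ?_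
    exact (continuous_abs.tendsto' 0 0 (by simp)).mono_left nhdsWithin_le_nhds
  · have h0 : HasDerivAt (fun s : ℝ => s ^ 2) (2 * |t|) t := by
      have h1 := hasDerivAt_pow 2 t
      refine h1.congr_deriv ?_
      rw [abs_of_pos ht]
      push_cast
      ring
    refine h0.congr_of_eventuallyEq ?_
    filter_upwards [Ioi_mem_nhds ht] with y hy
    rw [abs_of_pos (Set.mem_Ioi.mp hy)]; ring

lemma hasDerivAt_bumpPhi (u : ℝ) :
    HasDerivAt bumpPhi (3 * max (1 - u ^ 2) 0 ^ 2 * (-(2 * u))) u := by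
  have hfun : bumpPhi = fun v => max (1 - v ^ 2) 0 ^ 3 := funext bumpPhi_eq
  rw [hfun]
  have hin : HasDerivAt (fun v : ℝ => 1 - v ^ 2) (-(2 * u)) u := by
    have := (hasDerivAt_pow 2 u).const_sub 1
    refine this.congr_deriv ?_
    push_cast; ring
  exact (hasDerivAt_maxcube (1 - u ^ 2)).comp u hin

/-- Pointwise derivative of one summand of the transform. -/
noncomputable def Dterm (a z c x : ℝ) : ℝ :=
  a * (3 * max (1 - ((x - z) / c) ^ 2) 0 ^ 2 * (-(2 * ((x - z) / c))) * (1 / c))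
      * ((x - z) * |x - z|)
    + a * bumpPhi ((x - z) / c) * (2 * |x - z|)

lemma hasDerivAt_term (a z c x : ℝ) :
    HasDerivAt (fun x => a * bumpPhi ((x - z) / c) * ((x - z) * |x - z|))
      (Dterm a z c x) x := by
  have hin : HasDerivAt (fun x : ℝ => (x - z) / c) (1 / c) x := by
    simpa using ((hasDerivAt_id x).sub_const z).div_const c
  have h1 : HasDerivAt (fun x : ℝ => bumpPhi ((x - z) / c))
      (3 * max (1 - ((x - z) / c) ^ 2) 0 ^ 2 * (-(2 * ((x - z) / c))) * (1 / c)) x :=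
    by have := (hasDerivAt_bumpPhi ((x - z) / c)).comp x hin; exact this
  have h2 : HasDerivAt (fun x : ℝ => (x - z) * |x - z|) (2 * |x - z|) x := by
    have := (hasDerivAt_mulabs (x - z)).comp x ((hasDerivAt_id x).sub_const z)
    simp only [hasDerivAt_id', mul_one] at this; exact this
  exact (h1.const_mul a).mul h2

lemma Dterm_key (a z c x : ℝ) (hc : 0 < c) :
    Dterm a z c x
      = a * |x - z| * (2 * max (1 - ((x - z) / c) ^ 2) 0 ^ 2
          * (max (1 - ((x - z) / c) ^ 2) 0 - 3 * ((x - z) / c) ^ 2)) := by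
  have hc' : c ≠ 0 := hc.ne'
  set u := (x - z) / c with hu
  have ht : x - z = u * c := by rw [hu]; field_simp
  unfold Dterm
  rw [bumpPhi_eq, ht, abs_mul, abs_of_pos hc]
  field_simp
  ring

lemma Dterm_zero (a z c x : ℝ) (hc : 0 < c) (h : c ≤ |x - z|) :
    Dterm a z c x = 0 := by
  have h1 : (1:ℝ) ≤ ((x - z) / c) ^ 2 := by
    rw [div_pow]
    rw [le_div_iff₀ (by positivity)]
    calc (1:ℝ) * c ^ 2 = c * c := by ring
    _ ≤ |x - z| * |x - z| := mul_le_mul h h hc.le (abs_nonneg _)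
    _ = (x - z) ^ 2 := by rw [← abs_mul, ← sq, abs_of_nonneg (sq_nonneg _)]
  have hM : max (1 - ((x - z) / c) ^ 2) 0 = 0 := max_eq_right (by linarith)
  rw [Dterm_key a z c x hc, hM]
  ring

lemma Dterm_bound (a z c x : ℝ) (hc : 0 < c) (h : |x - z| ≤ c) :
    |Dterm a z c x| ≤ 6 * |a| * c := by
  set u := (x - z) / c with hu
  have hu2 : u ^ 2 ≤ 1 := by
    rw [hu, div_pow, div_le_one (by positivity)]
    calc (x - z) ^ 2 = |x - z| * |x - z| := by
          rw [← abs_mul, ← sq, abs_of_nonneg (sq_nonneg _)]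
    _ ≤ c * c := mul_le_mul h h (abs_nonneg _) hc.le
    _ = c ^ 2 := by ring
  set M := max (1 - u ^ 2) 0 with hM
  have hM0 : 0 ≤ M := le_max_right _ _
  have hM1 : M ≤ 1 := max_le (by nlinarith [sq_nonneg u]) (by norm_num)
  have hkey := Dterm_key a z c x hc
  rw [← hu, ← hM] at hkey
  rw [hkey, abs_mul, abs_mul, abs_abs]
  have hpsi : |2 * M ^ 2 * (M - 3 * u ^ 2)| ≤ 6 := by
    rw [abs_le]
    constructor <;> nlinarith [sq_nonneg u, sq_nonneg M]
  calc |a| * |x - z| * |2 * M ^ 2 * (M - 3 * u ^ 2)|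
      ≤ |a| * c * 6 := by
        apply mul_le_mul (mul_le_mul le_rfl h (abs_nonneg _) (abs_nonneg a)) hpsi
          (abs_nonneg _) (by positivity)
    _ = 6 * |a| * c := by ring

lemma continuous_Dterm (a z c : ℝ) : Continuous (fun x => Dterm a z c x) := by
  unfold Dterm
  simp only [bumpPhi_eq]
  fun_prop

/-- The transform G is continuously differentiable with everywhere positive derivative. -/
theorem Gtransform_contDiff_deriv_pos
    (m : ℕ) (hm : 0 < m) (ζ α : Fin m → ℝ) (hζ : StrictMono ζ) (hα : ∀ k, α k ≠ 0)
    (c : ℝ) (hc0 : 0 < c) (hc1 : ∀ k, c < 1 / (6 * |α k|))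
    (hc2 : ∀ (k : Fin m) (h : (k : ℕ) + 1 < m), c < (ζ ⟨(k : ℕ) + 1, h⟩ - ζ k) / 2) :
    ContDiff ℝ 1 (Gtransform m ζ α c) ∧ ∀ x : ℝ, 0 < deriv (Gtransform m ζ α c) x := by
  -- separation of the centers
  have hsep : ∀ j k : Fin m, j ≠ k → 2 * c < |ζ j - ζ k| := by
    have key : ∀ j k : Fin m, j < k → 2 * c < ζ k - ζ j := by
      intro j k hlt
      have hjk : (j : ℕ) + 1 ≤ (k : ℕ) := Nat.succ_le_of_lt hlt
      have h1 : (j : ℕ) + 1 < m := lt_of_le_of_lt hjk k.isLt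
      have h2 := hc2 j h1
      have h3 : ζ ⟨(j : ℕ) + 1, h1⟩ ≤ ζ k := hζ.monotone (by
        show ((⟨(j : ℕ) + 1, h1⟩ : Fin m) : ℕ) ≤ (k : ℕ)
        exact hjk)
      linarith
    intro j k hjk
    rcases lt_or_gt_of_ne hjk with h | h
    · have := key j k h
      calc 2 * c < ζ k - ζ j := this
      _ ≤ |ζ k - ζ j| := le_abs_self _
      _ = |ζ j - ζ k| := abs_sub_comm _ _
    · have := key k j h
      calc 2 * c < ζ j - ζ k := this
      _ ≤ |ζ j - ζ k| := le_abs_self _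
  -- derivative
  have hG : ∀ x : ℝ, HasDerivAt (Gtransform m ζ α c)
      (1 + ∑ k : Fin m, Dterm (α k) (ζ k) c x) x := by
    intro x
    have h1 : HasDerivAt (fun x : ℝ => x) 1 x := hasDerivAt_id' x
    have h2 : HasDerivAt
        (fun x : ℝ => ∑ k : Fin m, α k * bumpPhi ((x - ζ k) / c) * ((x - ζ k) * |x - ζ k|))
        (∑ k : Fin m, Dterm (α k) (ζ k) c x) x :=
      HasDerivAt.fun_sum (fun k _ => hasDerivAt_term (α k) (ζ k) c x)
    exact h1.add h2
  have hderiv : deriv (Gtransform m ζ α c)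
      = fun x => 1 + ∑ k : Fin m, Dterm (α k) (ζ k) c x :=
    funext fun x => (hG x).deriv
  constructor
  · rw [contDiff_one_iff_deriv]
    refine ⟨fun x => (hG x).differentiableAt, ?_⟩
    rw [hderiv]
    exact continuous_const.add (continuous_finset_sum _ fun k _ => continuous_Dterm _ _ _)
  · intro x
    rw [hderiv]
    show 0 < 1 + ∑ k : Fin m, Dterm (α k) (ζ k) c x
    by_cases h : ∃ k0 : Fin m, |x - ζ k0| ≤ c
    · obtain ⟨k0, hk0⟩ := h
      have hS : ∑ k : Fin m, Dterm (α k) (ζ k) c x = Dterm (α k0) (ζ k0) c x := by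
        apply Finset.sum_eq_single_of_mem k0 (Finset.mem_univ _)
        intro j _ hj
        apply Dterm_zero _ _ _ _ hc0
        have htri : |ζ j - ζ k0| ≤ |x - ζ j| + |x - ζ k0| := by
          calc |ζ j - ζ k0| = |(ζ j - x) + (x - ζ k0)| := by ring_nf
          _ ≤ |ζ j - x| + |x - ζ k0| := abs_add_le _ _
          _ = |x - ζ j| + |x - ζ k0| := by rw [abs_sub_comm]
        have := hsep j k0 hj
        linarith
      rw [hS]
      have hb := Dterm_bound (α k0) (ζ k0) c x hc0 hk0
      have hαpos : (0:ℝ) < |α k0| := abs_pos.mpr (hα k0)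
      have hlt : 6 * |α k0| * c < 1 := by
        have h1 := hc1 k0
        have h6 : (0:ℝ) < 6 * |α k0| := by positivity
        calc 6 * |α k0| * c < 6 * |α k0| * (1 / (6 * |α k0|)) :=
          mul_lt_mul_of_pos_left h1 h6
        _ = 1 := by field_simp
      have := abs_lt.mp (lt_of_le_of_lt hb hlt)
      linarith [this.1]
    · push_neg at h
      have hS : ∑ k : Fin m, Dterm (α k) (ζ k) c x = 0 :=
        Finset.sum_eq_zero fun k _ => Dterm_zero _ _ _ _ hc0 (le_of_lt (h k))
      rw [hS]
      norm_num
end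

section
/- The transform G is a bijection from ℝ onto ℝ, G is Lipschitz continuous, and its global inverse G^{-1} : ℝ → ℝ is Lipschitz continuous. -/
open Set Filter

/-- Derivative of `x ↦ x * |x|` is `2 * |x|`. -/
lemma hasDerivAt_mul_abs' (t : ℝ) : HasDerivAt (fun x : ℝ => x * |x|) (2 * |t|) t := by
  rcases lt_trichotomy t 0 with ht | rfl | ht
  · have h : HasDerivAt (fun x : ℝ => -(x * x)) (2 * |t|) t := by
      have := ((hasDerivAt_id t).mul (hasDerivAt_id t)).neg
      exact this.congr_deriv (by rw [abs_of_neg ht]; simp only [id_eq]; ring)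
    refine h.congr_of_eventuallyEq ?_
    filter_upwards [eventually_lt_nhds ht] with x hx
    rw [abs_of_neg hx]; ring
  · rw [hasDerivAt_iff_tendsto_slope]
    have h : ∀ x ∈ ({(0:ℝ)}ᶜ : Set ℝ), |x| = slope (fun x : ℝ => x * |x|) 0 x := by
      intro x hx
      simp only [slope_def_field, mem_compl_iff, mem_singleton_iff] at *
      field_simp
      simp
    have : Tendsto (fun x : ℝ => |x|) (nhdsWithin 0 {(0:ℝ)}ᶜ) (nhds (2 * |(0:ℝ)|)) := by
      simp only [abs_zero, mul_zero]
      exact (continuous_abs.tendsto' 0 0 abs_zero).mono_left nhdsWithin_le_nhds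
    exact this.congr' (eventually_nhdsWithin_of_forall h)
  · have h : HasDerivAt (fun x : ℝ => x * x) (2 * |t|) t := by
      have := (hasDerivAt_id t).mul (hasDerivAt_id t)
      exact this.congr_deriv (by rw [abs_of_pos ht]; simp only [id_eq]; ring)
    refine h.congr_of_eventuallyEq ?_
    filter_upwards [eventually_gt_nhds ht] with x hx
    rw [abs_of_pos hx]

lemma clamp_mono' (A B : ℝ) {x y : ℝ} (h : x ≤ y) :
    max A (min B x) ≤ max A (min B y) :=
  max_le_max le_rfl (min_le_min le_rfl h)

lemma clamp_sub_clamp_le' (A B : ℝ) {x y : ℝ} (h : x ≤ y) :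
    max A (min B y) - max A (min B x) ≤ y - x := by
  simp only [max_def, min_def]
  split_ifs <;> linarith

/-- Sum of lengths of intersections of `[x,y]` with ordered disjoint intervals. -/
lemma sum_clamp_le' : ∀ (n : ℕ) (a b : Fin n → ℝ), (∀ k, a k ≤ b k) →
    (∀ i j : Fin n, i < j → b i ≤ a j) →
    ∀ x y : ℝ, x ≤ y →
    ∑ k : Fin n, (max (a k) (min (b k) y) - max (a k) (min (b k) x)) ≤ y - x := by
  intro n
  induction n with
  | zero => intro a b _ _ x y hxy; simp; linarith
  | succ n ih =>
    intro a b hab hsep x y hxy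
    rw [Fin.sum_univ_castSucc]
    set A := a (Fin.last n) with hA
    set B := b (Fin.last n) with hB
    have hAB : A ≤ B := hab _
    have hab' : ∀ i : Fin n, a (Fin.castSucc i) ≤ b (Fin.castSucc i) := fun i => hab _
    have hsep' : ∀ i j : Fin n, i < j →
        b (Fin.castSucc i) ≤ a (Fin.castSucc j) := fun i j hij =>
      hsep _ _ (by simpa using hij)
    have hbA : ∀ i : Fin n, b (Fin.castSucc i) ≤ A := fun i =>
      hsep _ _ (Fin.castSucc_lt_last i)
    rcases le_total y A with hyA | hAy
    · have hy : min B y = y := min_eq_right (hyA.trans hAB)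
      have hx : min B x = x := min_eq_right ((hxy.trans hyA).trans hAB)
      have hy' : max A y = A := max_eq_left hyA
      have hx' : max A x = A := max_eq_left (hxy.trans hyA)
      rw [hy, hx, hy', hx']
      have := ih (fun i => a (Fin.castSucc i)) (fun i => b (Fin.castSucc i)) hab' hsep' x y hxy
      linarith
    · rcases le_total x A with hxA | hAx
      · have h1 := ih (fun i => a (Fin.castSucc i)) (fun i => b (Fin.castSucc i)) hab' hsep' x A hxA
        have h2 : ∀ i : Fin n, min (b (Fin.castSucc i)) y = min (b (Fin.castSucc i)) A := by
          intro i
          rw [min_eq_left ((hbA i).trans hAy), min_eq_left (hbA i)]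
        have hsum : ∑ i : Fin n, (max (a (Fin.castSucc i)) (min (b (Fin.castSucc i)) y) -
                max (a (Fin.castSucc i)) (min (b (Fin.castSucc i)) x))
            = ∑ i : Fin n, (max (a (Fin.castSucc i)) (min (b (Fin.castSucc i)) A) -
                max (a (Fin.castSucc i)) (min (b (Fin.castSucc i)) x)) :=
          Finset.sum_congr rfl fun i _ => by rw [h2 i]
        rw [hsum]
        have hminx : min B x = x := min_eq_right (hxA.trans hAB)
        have hmaxx : max A (min B x) = A := by rw [hminx]; exact max_eq_left hxA
        have hmaxy : max A (min B y) ≤ y := max_le hAy (min_le_right _ _)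
        rw [hmaxx]
        linarith
      · have h2 : ∀ i : Fin n, (max (a (Fin.castSucc i)) (min (b (Fin.castSucc i)) y) -
            max (a (Fin.castSucc i)) (min (b (Fin.castSucc i)) x)) = 0 := by
          intro i
          rw [min_eq_left ((hbA i).trans (hAx.trans hxy)), min_eq_left ((hbA i).trans hAx)]
          ring
        rw [Finset.sum_congr rfl fun i _ => h2 i]
        simp only [Finset.sum_const_zero, zero_add]
        exact clamp_sub_clamp_le' A B hxy

/-- Single-term Lipschitz-type estimate localized to the support interval. -/
lemma bump_term_est (z ak c : ℝ) (hc0 : 0 < c) {x y : ℝ} (hxy : x ≤ y) :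
    |ak * bumpPhi ((y - z)/c) * ((y - z) * |y - z|)
      - ak * bumpPhi ((x - z)/c) * ((x - z) * |x - z|)|
      ≤ (6 * |ak| * c) *
        (max (z - c) (min (z + c) y) - max (z - c) (min (z + c) x)) := by
  have hcne : c ≠ 0 := hc0.ne'
  set F : ℝ → ℝ := fun t =>
    ak * ((1 + (t - z)/c)^3 * (1 - (t - z)/c)^3) * ((t - z) * |t - z|) with hFdef
  set D : ℝ → ℝ := fun t =>
    ak * |t - z| * ((1 - ((t - z)/c)^2)^2 * (2 - 8*((t - z)/c)^2)) with hDdef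
  have hF : ∀ t, HasDerivAt F (D t) t := by
    intro t
    have hu : HasDerivAt (fun t : ℝ => (t - z)/c) (1/c) t := by
      simpa using ((hasDerivAt_id t).sub_const z).div_const c
    have hp : HasDerivAt (fun t : ℝ => (1 + (t - z)/c)^3)
        (3 * (1 + (t - z)/c)^2 * (1/c)) t := by
      simpa using (hu.const_add 1).fun_pow 3
    have hq : HasDerivAt (fun t : ℝ => (1 - (t - z)/c)^3)
        (3 * (1 - (t - z)/c)^2 * (-(1/c))) t := by
      simpa using (hu.const_sub 1).fun_pow 3
    have hr : HasDerivAt (fun t : ℝ => (t - z) * |t - z|) (2 * |t - z|) t := by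
      have := (hasDerivAt_mul_abs' (t - z)).comp t ((hasDerivAt_id t).sub_const z)
      exact this.congr_deriv (mul_one _)
    have := ((hp.mul hq).const_mul ak).mul hr
    refine this.congr_deriv ?_
    simp only [hDdef, Pi.mul_apply]
    field_simp
    ring
  have hbound : ∀ t ∈ Icc (z - c) (z + c), ‖D t‖ ≤ 6 * |ak| * c := by
    intro t ht
    have hw : |t - z| ≤ c := abs_le.mpr ⟨by linarith [ht.1], by linarith [ht.2]⟩
    have hu2 : ((t - z)/c)^2 ≤ 1 := by
      rw [div_pow, div_le_one (by positivity)]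
      calc (t - z)^2 = |t - z|^2 := (sq_abs _).symm
        _ ≤ c^2 := by nlinarith [abs_nonneg (t - z)]
    set u := (t - z)/c
    have hQ : |(1 - u^2)^2 * (2 - 8*u^2)| ≤ 6 := by
      have h2 : 0 ≤ u^2 := sq_nonneg u
      rcases abs_cases ((1 - u^2)^2 * (2 - 8*u^2)) with ⟨h, _⟩ | ⟨h, _⟩ <;> rw [h] <;>
        nlinarith [sq_nonneg (1 - u^2), sq_nonneg u]
    have hDeq : ‖D t‖ = |ak| * |t - z| * |(1 - u^2)^2 * (2 - 8*u^2)| := by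
      simp only [hDdef, Real.norm_eq_abs, abs_mul, abs_abs]
      rfl
    rw [hDeq]
    have step : |ak| * |t - z| * |(1 - u^2)^2 * (2 - 8*u^2)| ≤ (|ak| * c) * 6 :=
      mul_le_mul (mul_le_mul le_rfl hw (abs_nonneg _) (abs_nonneg ak)) hQ (abs_nonneg _)
        (by positivity)
    linarith
  set mx := max (z - c) (min (z + c) x) with hmx
  set my := max (z - c) (min (z + c) y) with hmy
  have hclamp_mem : ∀ t : ℝ, max (z - c) (min (z + c) t) ∈ Icc (z - c) (z + c) := by
    intro t
    exact ⟨le_max_left _ _, max_le (by linarith) (min_le_left _ _)⟩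
  have hgF : ∀ t : ℝ, ak * bumpPhi ((t - z)/c) * ((t - z) * |t - z|)
      = F (max (z - c) (min (z + c) t)) := by
    intro t
    rcases lt_or_ge t (z - c) with h1 | h1
    · have hcl : max (z - c) (min (z + c) t) = z - c := by
        rw [min_eq_right (by linarith), max_eq_left (by linarith)]
      rw [hcl]
      have hb : bumpPhi ((t - z)/c) = 0 := by
        rw [bumpPhi, if_neg]
        rw [abs_div, abs_of_pos hc0, not_le, lt_div_iff₀ hc0]
        rw [abs_of_neg (by linarith : t - z < 0)]
        linarith
      have hFv : F (z - c) = 0 := by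
        simp only [hFdef]
        have h : (z - c - z)/c = -1 := by field_simp; ring
        rw [h]; ring
      rw [hb, hFv]; ring
    · rcases le_or_gt t (z + c) with h2 | h2
      · have hcl : max (z - c) (min (z + c) t) = t := by
          rw [min_eq_right h2, max_eq_right h1]
        rw [hcl]
        have hb : bumpPhi ((t - z)/c) = (1 + (t - z)/c)^3 * (1 - (t - z)/c)^3 := by
          rw [bumpPhi, if_pos]
          rw [abs_div, abs_of_pos hc0, div_le_one hc0]
          exact abs_le.mpr ⟨by linarith, by linarith⟩
        rw [hb]
      · have hcl : max (z - c) (min (z + c) t) = z + c := by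
          rw [min_eq_left h2.le, max_eq_right (by linarith)]
        rw [hcl]
        have hb : bumpPhi ((t - z)/c) = 0 := by
          rw [bumpPhi, if_neg]
          rw [abs_div, abs_of_pos hc0, not_le, lt_div_iff₀ hc0]
          rw [abs_of_pos (by linarith : (0:ℝ) < t - z)]
          linarith
        have hFv : F (z + c) = 0 := by
          simp only [hFdef]
          have h : (z + c - z)/c = 1 := by field_simp; ring
          rw [h]; ring
        rw [hb, hFv]; ring
  rw [hgF y, hgF x]
  have h := (convex_Icc (z - c) (z + c)).norm_image_sub_le_of_norm_hasDerivWithin_le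
    (fun t _ => (hF t).hasDerivWithinAt) hbound (hclamp_mem x) (hclamp_mem y)
  rw [Real.norm_eq_abs, Real.norm_eq_abs] at h
  have hmono : mx ≤ my := clamp_mono' _ _ hxy
  refine h.trans ?_
  rw [abs_of_nonneg (sub_nonneg.mpr hmono)]

/-- The transform G is a Lipschitz bijection of ℝ with Lipschitz inverse. -/
theorem Gtransform_bijective_lipschitz
    (m : ℕ) (hm : 0 < m) (ζ α : Fin m → ℝ) (hζ : StrictMono ζ) (hα : ∀ k, α k ≠ 0)
    (c : ℝ) (hc0 : 0 < c) (hc1 : ∀ k, c < 1 / (6 * |α k|))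
    (hc2 : ∀ (k : Fin m) (h : (k : ℕ) + 1 < m), c < (ζ ⟨(k : ℕ) + 1, h⟩ - ζ k) / 2) :
    Function.Bijective (Gtransform m ζ α c) ∧
      (∃ K : NNReal, LipschitzWith K (Gtransform m ζ α c)) ∧
      ∃ K : NNReal, LipschitzWith K (Function.invFun (Gtransform m ζ α c)) := by
  set G := Gtransform m ζ α c with hG
  have hne : (Finset.univ : Finset (Fin m)).Nonempty := ⟨⟨0, hm⟩, Finset.mem_univ _⟩
  set L : ℝ := Finset.univ.sup' hne (fun k => 6 * |α k| * c) with hL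
  have hL1 : L < 1 := by
    rw [hL, Finset.sup'_lt_iff]
    intro k _
    have hak : 0 < |α k| := abs_pos.mpr (hα k)
    have h := hc1 k
    rw [lt_div_iff₀ (by positivity)] at h
    nlinarith
  have hL0 : 0 ≤ L := by
    refine le_trans ?_ (Finset.le_sup' (f := fun k => 6 * |α k| * c)
      (Finset.mem_univ (⟨0, hm⟩ : Fin m)))
    positivity
  have hsep : ∀ i j : Fin m, i < j → ζ i + c ≤ ζ j - c := by
    intro i j hij
    have hij0 : (i : ℕ) < (j : ℕ) := hij
    have hij' : (i : ℕ) + 1 < m := lt_of_le_of_lt (Nat.succ_le_of_lt hij0) j.isLt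
    have h2 := hc2 i hij'
    have hle : ζ ⟨(i : ℕ) + 1, hij'⟩ ≤ ζ j := by
      apply hζ.monotone
      rw [Fin.le_def]
      exact Nat.succ_le_of_lt hij0
    linarith
  have hkey : ∀ x y : ℝ, x ≤ y → |(G y - y) - (G x - x)| ≤ L * (y - x) := by
    intro x y hxy
    have hdiff : (G y - y) - (G x - x) = ∑ k : Fin m,
        (α k * bumpPhi ((y - ζ k)/c) * ((y - ζ k) * |y - ζ k|)
         - α k * bumpPhi ((x - ζ k)/c) * ((x - ζ k) * |x - ζ k|)) := by
      rw [hG]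
      simp only [Gtransform, add_sub_cancel_left]
      rw [Finset.sum_sub_distrib]
    rw [hdiff]
    calc |∑ k : Fin m,
        (α k * bumpPhi ((y - ζ k)/c) * ((y - ζ k) * |y - ζ k|)
         - α k * bumpPhi ((x - ζ k)/c) * ((x - ζ k) * |x - ζ k|))|
        ≤ ∑ k : Fin m, |α k * bumpPhi ((y - ζ k)/c) * ((y - ζ k) * |y - ζ k|)
            - α k * bumpPhi ((x - ζ k)/c) * ((x - ζ k) * |x - ζ k|)| :=
          Finset.abs_sum_le_sum_abs _ _
      _ ≤ ∑ k : Fin m, (6 * |α k| * c) *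
            (max (ζ k - c) (min (ζ k + c) y) - max (ζ k - c) (min (ζ k + c) x)) :=
          Finset.sum_le_sum fun k _ => bump_term_est (ζ k) (α k) c hc0 hxy
      _ ≤ ∑ k : Fin m, L *
            (max (ζ k - c) (min (ζ k + c) y) - max (ζ k - c) (min (ζ k + c) x)) :=
          Finset.sum_le_sum fun k _ => mul_le_mul_of_nonneg_right
            (Finset.le_sup' (f := fun k => 6 * |α k| * c) (Finset.mem_univ k))
            (sub_nonneg.mpr (clamp_mono' _ _ hxy))
      _ = L * ∑ k : Fin m,
            (max (ζ k - c) (min (ζ k + c) y) - max (ζ k - c) (min (ζ k + c) x)) :=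
          (Finset.mul_sum _ _ _).symm
      _ ≤ L * (y - x) := mul_le_mul_of_nonneg_left
          (sum_clamp_le' m (fun k => ζ k - c) (fun k => ζ k + c)
            (fun k => by show ζ k - c ≤ ζ k + c; linarith)
            (fun i j hij => by show ζ i + c ≤ ζ j - c; exact hsep i j hij) x y hxy) hL0
  have h1L : 0 < 1 - L := by linarith
  have hlower : ∀ x y : ℝ, x ≤ y → (1 - L) * (y - x) ≤ G y - G x := by
    intro x y h
    have := abs_le.mp (hkey x y h)
    nlinarith [this.1, this.2]
  have hupper : ∀ x y : ℝ, x ≤ y → G y - G x ≤ (1 + L) * (y - x) := by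
    intro x y h
    have := abs_le.mp (hkey x y h)
    nlinarith [this.1, this.2]
  have hdistle : ∀ x y : ℝ, dist (G x) (G y) ≤ (1 + L) * dist x y := by
    have key2 : ∀ x y : ℝ, x ≤ y → dist (G x) (G y) ≤ (1 + L) * dist x y := by
      intro x y h
      have h1 := hlower x y h
      have h2 := hupper x y h
      rw [Real.dist_eq, Real.dist_eq, abs_sub_comm (G x) (G y), abs_sub_comm x y,
        abs_of_nonneg (sub_nonneg.mpr h), abs_of_nonneg (by nlinarith : (0:ℝ) ≤ G y - G x)]
      exact h2
    intro x y
    rcases le_total x y with h | h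
    · exact key2 x y h
    · rw [dist_comm, dist_comm x y]; exact key2 y x h
  have hlip : LipschitzWith (1 + L).toNNReal G :=
    LipschitzWith.of_dist_le_mul fun x y => by
      rw [Real.coe_toNNReal _ (by linarith)]; exact hdistle x y
  have hinj : Function.Injective G := by
    intro x y hxy
    rcases le_total x y with h | h
    · have := hlower x y h; refine le_antisymm h ?_; nlinarith [this]
    · have := hlower y x h; refine le_antisymm ?_ h; nlinarith [this]
  have hcont : Continuous G := hlip.continuous
  have htop : Tendsto G atTop atTop := by
    refine tendsto_atTop_mono' atTop ?_
      (tendsto_atTop_add_const_left atTop (G 0)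
        (Tendsto.const_mul_atTop h1L tendsto_id))
    filter_upwards [eventually_ge_atTop (0:ℝ)] with x hx
    have := hlower 0 x hx
    simp only [id_eq]
    nlinarith
  have hbot : Tendsto G atBot atBot := by
    refine tendsto_atBot_mono' atBot ?_
      (tendsto_atBot_add_const_left atBot (G 0)
        (Tendsto.const_mul_atBot h1L tendsto_id))
    filter_upwards [eventually_le_atBot (0:ℝ)] with x hx
    have := hlower x 0 hx
    simp only [id_eq]
    nlinarith
  have hsurj : Function.Surjective G := hcont.surjective htop hbot
  refine ⟨⟨hinj, hsurj⟩, ⟨_, hlip⟩, ⟨((1 - L)⁻¹).toNNReal, ?_⟩⟩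
  refine LipschitzWith.of_dist_le_mul fun p q => ?_
  have hx : G (Function.invFun G p) = p := Function.rightInverse_invFun hsurj p
  have hy : G (Function.invFun G q) = q := Function.rightInverse_invFun hsurj q
  set x := Function.invFun G p
  set y := Function.invFun G q
  rw [Real.coe_toNNReal _ (by positivity), Real.dist_eq, Real.dist_eq, ← hx, ← hy]
  have habs : (1 - L) * |x - y| ≤ |G x - G y| := by
    rcases le_total x y with h | h
    · have h1 := hlower x y h
      rw [abs_sub_comm x y, abs_of_nonneg (sub_nonneg.mpr h),
        abs_sub_comm (G x) (G y), abs_of_nonneg (by nlinarith : (0:ℝ) ≤ G y - G x)]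
      exact h1
    · have h1 := hlower y x h
      rw [abs_of_nonneg (sub_nonneg.mpr h),
        abs_of_nonneg (by nlinarith : (0:ℝ) ≤ G x - G y)]
      exact h1
  calc |x - y| = (1 - L)⁻¹ * ((1 - L) * |x - y|) := by field_simp
    _ ≤ (1 - L)⁻¹ * |G x - G y| :=
        mul_le_mul_of_nonneg_left habs (by positivity)
end

section
/- Let n ∈ ℕ with n ≥ 2, δ = T/n, and let s, t ∈ [0,T] satisfy t > t̲ and s ≤ t̲ − δ. Define W̄_1 = (W_t − W_{t̲})/√(t − t̲), W̄_2 = (W_{t̲} − W_{t̲−(t−t̲)})/√(t − t̲), W̄_3 = (W_{t̲−(t−t̲)} − W_{t̲−δ})/√(δ − (t − t̲)), and P̄ = N_t − N_{t̲−δ}. Then for every event A ∈ F_s, P( A ∩ ( {P̄ > 0} ∪ {max_{i∈{1,2,3}} |W̄_i| > √(2 log(T/δ))} ) ) ≤ P(A) · ( 3δ/(T√(π log(T/δ))) + 2δ‖λ‖_∞ ). -/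
open MeasureTheory ProbabilityTheory

/-- Grid values of the Euler–Maruyama scheme with step size `δ` and initial value `x`. -/
noncomputable def emGrid {Ω : Type*} (μ σ ρ : ℝ → ℝ) (W N : ℝ → Ω → ℝ)
    (δ : ℝ) (x : ℝ) : ℕ → Ω → ℝ
  | 0, _ => x
  | (j + 1), ω =>
      emGrid μ σ ρ W N δ x j ω
        + μ (emGrid μ σ ρ W N δ x j ω) * δ
        + σ (emGrid μ σ ρ W N δ x j ω) * (W (((j : ℝ) + 1) * δ) ω - W ((j : ℝ) * δ) ω)
        + ρ (emGrid μ σ ρ W N δ x j ω) * (N (((j : ℝ) + 1) * δ) ω - N ((j : ℝ) * δ) ω)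

/-- The last grid point `t̲ = δ ⌊t/δ⌋` before time `t`. -/
noncomputable def lastGrid (δ t : ℝ) : ℝ := (⌊t / δ⌋.toNat : ℝ) * δ

/-- The continuous-time Euler–Maruyama scheme
`X_t = X_t̲ + μ(X_t̲)(t - t̲) + σ(X_t̲)(W_t - W_t̲) + ρ(X_t̲)(N_t - N_t̲)`. -/
noncomputable def emProc {Ω : Type*} (μ σ ρ : ℝ → ℝ) (W N : ℝ → Ω → ℝ)
    (δ : ℝ) (x : ℝ) (t : ℝ) (ω : Ω) : ℝ :=
  emGrid μ σ ρ W N δ x (⌊t / δ⌋.toNat) ω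
    + μ (emGrid μ σ ρ W N δ x (⌊t / δ⌋.toNat) ω) * (t - lastGrid δ t)
    + σ (emGrid μ σ ρ W N δ x (⌊t / δ⌋.toNat) ω) * (W t ω - W (lastGrid δ t) ω)
    + ρ (emGrid μ σ ρ W N δ x (⌊t / δ⌋.toNat) ω) * (N t ω - N (lastGrid δ t) ω)

open Real Set


lemma aux_hasDeriv (z : ℝ) :
    HasDerivAt (fun z : ℝ => -Real.exp (-z^2/2)) (z * Real.exp (-z^2/2)) z := by
  have h1 : HasDerivAt (fun z : ℝ => -z^2/2) (-z) z := by
    have := ((hasDerivAt_pow 2 z).neg.div_const 2)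
    simpa using this.congr_deriv (by ring)
  have := (h1.exp).neg
  exact this.congr_deriv (by ring)

lemma aux_tendsto : Filter.Tendsto (fun z : ℝ => -Real.exp (-z^2/2)) Filter.atTop (nhds 0) := by
  rw [show (0:ℝ) = -0 by ring]
  apply Filter.Tendsto.neg
  apply Real.tendsto_exp_atBot.comp
  have : Filter.Tendsto (fun z : ℝ => z^2/2) Filter.atTop Filter.atTop :=
    (Filter.tendsto_pow_atTop (by norm_num)).atTop_div_const (by norm_num)
  have h2 : Filter.Tendsto (fun z : ℝ => -(z^2/2)) Filter.atTop Filter.atBot :=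
    Filter.tendsto_neg_atBot_iff.mpr this
  exact h2.congr (fun z => by ring)

lemma aux_integrableOn {x : ℝ} (hx : 0 < x) :
    IntegrableOn (fun z : ℝ => z * Real.exp (-z^2/2)) (Set.Ioi x) := by
  apply integrableOn_Ioi_deriv_of_nonneg (l := 0)
    (aux_hasDeriv x).continuousAt.continuousWithinAt
    (fun z _ => aux_hasDeriv z)
    (fun z hz => mul_nonneg (le_of_lt (lt_trans hx hz)) (Real.exp_nonneg _)) aux_tendsto

lemma aux_integral {x : ℝ} (hx : 0 < x) :
    ∫ z in Set.Ioi x, z * Real.exp (-z^2/2) = Real.exp (-x^2/2) := by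
  have := integral_Ioi_of_hasDerivAt_of_tendsto (a := x) (m := 0)
    (aux_hasDeriv x).continuousAt.continuousWithinAt
    (fun z _ => aux_hasDeriv z) (aux_integrableOn hx) aux_tendsto
  simpa using this


lemma aux_exp_integrable {x : ℝ} : IntegrableOn (fun z : ℝ => Real.exp (-z^2/2)) (Set.Ioi x) := by
  have := (integrable_exp_neg_mul_sq (b := 1/2) (by norm_num)).integrableOn (s := Set.Ioi x)
  exact this.congr_fun (fun z _ => by ring_nf) measurableSet_Ioi

lemma aux_exp_tail {x : ℝ} (hx : 0 < x) :
    ∫ z in Set.Ioi x, Real.exp (-z^2/2) ≤ Real.exp (-x^2/2) / x := by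
  have hmono : ∫ z in Set.Ioi x, Real.exp (-z^2/2)
      ≤ ∫ z in Set.Ioi x, x⁻¹ * (z * Real.exp (-z^2/2)) := by
    apply setIntegral_mono_on aux_exp_integrable ((aux_integrableOn hx).const_mul _)
      measurableSet_Ioi
    intro z hz
    rw [Set.mem_Ioi] at hz
    have hz0 : 0 < z := lt_trans hx hz
    rw [← mul_assoc]
    have h1 : (1:ℝ) ≤ x⁻¹ * z := by
      rw [← inv_mul_cancel₀ (ne_of_gt hx)]
      exact mul_le_mul_of_nonneg_left hz.le (inv_nonneg.2 hx.le)
    nlinarith [Real.exp_pos (-z^2/2)]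
  rw [integral_const_mul, aux_integral hx] at hmono
  calc ∫ z in Set.Ioi x, Real.exp (-z^2/2) ≤ x⁻¹ * Real.exp (-x^2/2) := hmono
    _ = Real.exp (-x^2/2) / x := by ring

lemma std_gauss_tail {x : ℝ} (hx : 0 < x) :
    gaussianReal 0 1 {z : ℝ | x < |z|} ≤
      ENNReal.ofReal (2 * ((Real.sqrt (2*Real.pi))⁻¹ * (Real.exp (-x^2/2) / x))) := by
  have hset : {z : ℝ | x < |z|} ⊆ Set.Iic (-x) ∪ Set.Ioi x := by
    intro z hz
    simp only [Set.mem_setOf_eq, lt_abs] at hz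
    simp only [Set.mem_union, Set.mem_Iic, Set.mem_Ioi]
    rcases hz with h | h
    exacts [Or.inr h, Or.inl (by linarith)]
  have hpdf : ∀ z : ℝ, gaussianPDFReal 0 1 z = (Real.sqrt (2*Real.pi))⁻¹ * Real.exp (-z^2/2) := by
    intro z
    simp [gaussianPDFReal]
  have hIoi : ∫ z in Set.Ioi x, gaussianPDFReal 0 1 z
      ≤ (Real.sqrt (2*Real.pi))⁻¹ * (Real.exp (-x^2/2) / x) := by
    rw [setIntegral_congr_fun measurableSet_Ioi (fun z _ => hpdf z), integral_const_mul]
    apply mul_le_mul_of_nonneg_left (aux_exp_tail hx)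
    positivity
  have hIio : ∫ z in Set.Iic (-x), gaussianPDFReal 0 1 z
      ≤ (Real.sqrt (2*Real.pi))⁻¹ * (Real.exp (-x^2/2) / x) := by
    have hcomp : ∫ z in Set.Ioi x, gaussianPDFReal 0 1 (-z)
        = ∫ z in Set.Iic (-x), gaussianPDFReal 0 1 z := integral_comp_neg_Ioi x _
    rw [← hcomp]
    calc ∫ z in Set.Ioi x, gaussianPDFReal 0 1 (-z)
        = ∫ z in Set.Ioi x, gaussianPDFReal 0 1 z := by
          apply setIntegral_congr_fun measurableSet_Ioi
          intro z _
          show gaussianPDFReal 0 1 (-z) = gaussianPDFReal 0 1 z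
          rw [hpdf, hpdf z]
          ring_nf
      _ ≤ _ := hIoi
  calc gaussianReal 0 1 {z : ℝ | x < |z|}
      ≤ gaussianReal 0 1 (Set.Iic (-x) ∪ Set.Ioi x) := measure_mono hset
    _ ≤ gaussianReal 0 1 (Set.Iic (-x)) + gaussianReal 0 1 (Set.Ioi x) := measure_union_le _ _
    _ ≤ ENNReal.ofReal ((Real.sqrt (2*Real.pi))⁻¹ * (Real.exp (-x^2/2) / x))
        + ENNReal.ofReal ((Real.sqrt (2*Real.pi))⁻¹ * (Real.exp (-x^2/2) / x)) := by
        gcongr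
        · rw [gaussianReal_apply_eq_integral 0 one_ne_zero]
          exact ENNReal.ofReal_le_ofReal hIio
        · rw [gaussianReal_apply_eq_integral 0 one_ne_zero]
          exact ENNReal.ofReal_le_ofReal hIoi
    _ = ENNReal.ofReal (2 * ((Real.sqrt (2*Real.pi))⁻¹ * (Real.exp (-x^2/2) / x))) := by
        rw [← ENNReal.ofReal_add (by positivity) (by positivity)]
        ring_nf


lemma gauss_tail_norm {v : ℝ} (hv : 0 < v) {x : ℝ} (hx : 0 < x) :
    gaussianReal 0 (Real.toNNReal v) {y : ℝ | x < |y / Real.sqrt v|} ≤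
      ENNReal.ofReal (2 * ((Real.sqrt (2*Real.pi))⁻¹ * (Real.exp (-x^2/2) / x))) := by
  have hs : (0:ℝ) < Real.sqrt v := Real.sqrt_pos.mpr hv
  have hvar : (.mk ((Real.sqrt v)^2) (sq_nonneg _) * 1 : NNReal) = Real.toNNReal v := by
    ext
    simp only [NNReal.coe_mul, NNReal.coe_mk, NNReal.coe_one, mul_one, Real.sq_sqrt hv.le,
      Real.coe_toNNReal _ hv.le]
  have hmap : (gaussianReal 0 1).map (Real.sqrt v * ·) = gaussianReal 0 (Real.toNNReal v) := by
    rw [gaussianReal_map_const_mul (μ := 0) (v := 1) (Real.sqrt v), mul_zero, hvar]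
  have hS : MeasurableSet {y : ℝ | x < |y / Real.sqrt v|} :=
    measurableSet_lt measurable_const ((measurable_id.div_const _).abs)
  rw [← hmap, Measure.map_apply (measurable_const_mul _) hS]
  have hpre : (Real.sqrt v * ·) ⁻¹' {y : ℝ | x < |y / Real.sqrt v|} = {z : ℝ | x < |z|} := by
    ext z
    simp only [Set.mem_preimage, Set.mem_setOf_eq, mul_div_assoc]
    rw [mul_div_cancel₀ _ (ne_of_gt hs)]
  rw [hpre]
  exact std_gauss_tail hx

lemma poisson_tail (r : NNReal) : poissonMeasure r {k : ℕ | 0 < k} ≤ ENNReal.ofReal r := by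
  have h0 : ({k : ℕ | 0 < k} : Set ℕ) = ({0} : Set ℕ)ᶜ := by
    ext k; simp [Nat.pos_iff_ne_zero]
  have hprob : IsProbabilityMeasure (poissonMeasure r) := by
    infer_instance
  rw [h0, prob_compl_eq_one_sub (measurableSet_singleton 0)]
  have h1 : poissonMeasure r {0} = ENNReal.ofReal (Real.exp (-r)) := by
    rw [poissonMeasure_singleton]
    simp
  rw [h1, tsub_le_iff_right, ← ENNReal.ofReal_add (by positivity) (Real.exp_nonneg _)]
  rw [show (1 : ENNReal) = ENNReal.ofReal 1 by simp]
  apply ENNReal.ofReal_le_ofReal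
  nlinarith [Real.add_one_le_exp (-(r:ℝ))]

/-- Tail estimate for the normalized Brownian increments `W̄₁, W̄₂, W̄₃` and the Poisson
increment `P̄ = N_t - N_{t̲-δ}`: for every event `A ∈ F_s` with `s ≤ t̲ - δ`,
`P(A ∩ ({P̄ > 0} ∪ {max |W̄ᵢ| > √(2 log(T/δ))})) ≤ P(A)(3δ/(T √(π log(T/δ))) + 2δ‖λ‖_∞)`. -/
theorem brownian_poisson_increment_tail_estimate
    {Ω : Type*} {m0 : MeasurableSpace Ω}
    (F : Filtration ℝ m0) (P : Measure Ω) [IsProbabilityMeasure P]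
    (T : ℝ) (hT : 0 < T)
    (lam : ℝ → ℝ) (hlam_meas : Measurable lam)
    (hlam_pos : ∀ t ∈ Set.Icc (0:ℝ) T, 0 < lam t)
    (lamB : ℝ) (hlamB : ∀ t ∈ Set.Icc (0:ℝ) T, lam t ≤ lamB)
    (W N : ℝ → Ω → ℝ)
    (hW0 : ∀ ω, W 0 ω = 0) (hN0 : ∀ ω, N 0 ω = 0)
    (hW_adapted : ∀ t ∈ Set.Icc (0:ℝ) T, Measurable[F t] (W t))
    (hN_adapted : ∀ t ∈ Set.Icc (0:ℝ) T, Measurable[F t] (N t))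
    (hW_cont : ∀ᵐ ω ∂P, ContinuousOn (fun t => W t ω) (Set.Icc 0 T))
    (hN_mono : ∀ᵐ ω ∂P, ∀ s t : ℝ, 0 ≤ s → s ≤ t → t ≤ T → N s ω ≤ N t ω)
    (hN_rc : ∀ᵐ ω ∂P, ∀ t ∈ Set.Ico (0:ℝ) T,
      Filter.Tendsto (fun u => N u ω) (nhdsWithin t (Set.Ioi t)) (nhds (N t ω)))
    (hN_int : ∀ᵐ ω ∂P, ∀ t ∈ Set.Icc (0:ℝ) T, ∃ k : ℕ, N t ω = k)
    (hW_gauss : ∀ s t : ℝ, 0 ≤ s → s ≤ t → t ≤ T →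
      Measure.map (fun ω => W t ω - W s ω) P = gaussianReal 0 (Real.toNNReal (t - s)))
    (hN_poisson : ∀ s t : ℝ, 0 ≤ s → s ≤ t → t ≤ T →
      Measure.map (fun ω => N t ω - N s ω) P
        = Measure.map (fun k : ℕ => (k : ℝ))
            (poissonMeasure (Real.toNNReal (∫ u in s..t, lam u))))
    (h_indep : ∀ s t : ℝ, 0 ≤ s → s ≤ t → t ≤ T →
      Indep (MeasurableSpace.comap (fun ω => (W t ω - W s ω, N t ω - N s ω)) inferInstance)
        (F s) P)
    (hWN_indep : ∀ s t : ℝ, 0 ≤ s → s ≤ t → t ≤ T →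
      IndepFun (fun ω => W t ω - W s ω) (fun ω => N t ω - N s ω) P)
    :
    ∀ n : ℕ, 2 ≤ n → ∀ s t : ℝ, s ∈ Set.Icc (0:ℝ) T → t ∈ Set.Icc (0:ℝ) T →
      lastGrid (T / n) t < t → s ≤ lastGrid (T / n) t - T / n →
      ∀ A : Set Ω, MeasurableSet[F s] A →
      P (A ∩ ({ω | 0 < N t ω - N (lastGrid (T / n) t - T / n) ω}
          ∪ {ω | Real.sqrt (2 * Real.log (T / (T / n))) <
              max (max
                |(W t ω - W (lastGrid (T / n) t) ω) / Real.sqrt (t - lastGrid (T / n) t)|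
                |(W (lastGrid (T / n) t) ω
                    - W (lastGrid (T / n) t - (t - lastGrid (T / n) t)) ω)
                  / Real.sqrt (t - lastGrid (T / n) t)|)
                |(W (lastGrid (T / n) t - (t - lastGrid (T / n) t)) ω
                    - W (lastGrid (T / n) t - T / n) ω)
                  / Real.sqrt (T / n - (t - lastGrid (T / n) t))|}))
        ≤ P A * ENNReal.ofReal
            (3 * (T / n) / (T * Real.sqrt (Real.pi * Real.log (T / (T / n))))
              + 2 * (T / n) * lamB) := by
  intro n hn s t hs ht hlt hsle A hA
  have hn0 : (0:ℝ) < n := by exact_mod_cast (by omega : 0 < n)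
  set δ := T / n with hδdef
  have hδ : 0 < δ := div_pos hT hn0
  set b := lastGrid δ t with hbdef
  have h0s : 0 ≤ s := hs.1
  have hbδ0 : 0 ≤ b - δ := le_trans h0s hsle
  have hv0 : 0 < t - b := sub_pos.mpr hlt
  have hbval : b = (⌊t / δ⌋ : ℝ) * δ := by
    rw [hbdef, lastGrid]
    congr 1
    rw [← Int.cast_natCast, Int.toNat_of_nonneg (Int.floor_nonneg.mpr (div_nonneg ht.1 hδ.le))]
  have hv_le : t - b ≤ δ := by
    have h1 : t / δ < (⌊t / δ⌋ : ℝ) + 1 := Int.lt_floor_add_one _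
    have h2 : t < ((⌊t / δ⌋ : ℝ) + 1) * δ := by
      have := mul_lt_mul_of_pos_right h1 hδ
      rwa [div_mul_cancel₀ _ (ne_of_gt hδ)] at this
    rw [hbval]; linarith
  have hbT : b ≤ T := le_trans hlt.le ht.2
  have hTδn : T / δ = n := by rw [hδdef]; field_simp
  set L := Real.log (T / δ) with hLdef
  have hL : 0 < L := by
    rw [hLdef, hTδn]
    exact Real.log_pos (by exact_mod_cast (by omega : 1 < n))
  set x := Real.sqrt (2 * L) with hxdef
  have hx : 0 < x := Real.sqrt_pos.mpr (by linarith)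
  have hexp : Real.exp (-x^2/2) = δ / T := by
    rw [hxdef, Real.sq_sqrt (by linarith : (0:ℝ) ≤ 2 * L)]
    rw [show -(2*L)/2 = -L by ring, hLdef, Real.exp_neg, Real.exp_log (by positivity), inv_div]
  set G := 2 * ((Real.sqrt (2*Real.pi))⁻¹ * (Real.exp (-x^2/2) / x)) with hGdef
  have hG0 : 0 ≤ G := by rw [hGdef]; positivity
  have hsqrt4 : Real.sqrt (2*Real.pi) * Real.sqrt (2*L) = 2 * Real.sqrt (Real.pi * L) := by
    rw [← Real.sqrt_mul (by positivity), show (2*Real.pi)*(2*L) = 2^2*(Real.pi*L) by ring,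
      Real.sqrt_mul (by positivity), Real.sqrt_sq (by norm_num : (0:ℝ) ≤ 2)]
  have hπL : 0 < Real.sqrt (Real.pi * L) := Real.sqrt_pos.mpr (by positivity)
  have hG : G = δ / (T * Real.sqrt (Real.pi * L)) := by
    rw [hGdef, hexp, hxdef]
    have h1 : Real.sqrt (2*Real.pi) ≠ 0 := by positivity
    have h2 : Real.sqrt (2*L) ≠ 0 := by positivity
    have h3 : Real.sqrt (Real.pi*L) ≠ 0 := ne_of_gt hπL
    rw [div_div, inv_mul_eq_div, div_div, mul_div_assoc',
      div_eq_div_iff (by positivity) (by positivity)]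
    linear_combination (-(δ * T)) * hsqrt4
  have hlamB0 : 0 < lamB :=
    lt_of_lt_of_le (hlam_pos 0 ⟨le_refl _, hT.le⟩) (hlamB 0 ⟨le_refl _, hT.le⟩)
  have h2δ : 0 ≤ 2 * δ * lamB := by positivity
  have hWmeas : ∀ u ∈ Set.Icc (0:ℝ) T, Measurable (W u) :=
    fun u hu => (hW_adapted u hu).mono (F.le u) le_rfl
  have hNmeas : ∀ u ∈ Set.Icc (0:ℝ) T, Measurable (N u) :=
    fun u hu => (hN_adapted u hu).mono (F.le u) le_rfl
  -- Gaussian increment step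
  have step : ∀ s' t' : ℝ, 0 ≤ s' → s' < t' → t' ≤ T → s ≤ s' →
      P ({ω | x < |(W t' ω - W s' ω) / Real.sqrt (t' - s')|} ∩ A)
        ≤ P A * ENNReal.ofReal G := by
    intro s' t' h0 hlt' hT' hss'
    have hs'T : s' ∈ Set.Icc (0:ℝ) T := ⟨h0, le_trans hlt'.le hT'⟩
    have ht'T : t' ∈ Set.Icc (0:ℝ) T := ⟨le_trans h0 hlt'.le, hT'⟩
    have hS : MeasurableSet {p : ℝ × ℝ | x < |p.1 / Real.sqrt (t' - s')|} :=
      measurableSet_lt measurable_const ((measurable_fst.div_const _).abs)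
    have hindep := (Indep_iff _ _ P).mp (h_indep s' t' h0 hlt'.le hT')
    have hB : MeasurableSet[MeasurableSpace.comap
        (fun ω => (W t' ω - W s' ω, N t' ω - N s' ω)) inferInstance]
        {ω | x < |(W t' ω - W s' ω) / Real.sqrt (t' - s')|} :=
      ⟨{p : ℝ × ℝ | x < |p.1 / Real.sqrt (t' - s')|}, hS, rfl⟩
    rw [hindep _ _ hB (F.mono hss' _ hA), mul_comm]
    gcongr
    have hg : Measurable (fun ω => W t' ω - W s' ω) :=
      (hWmeas t' ht'T).sub (hWmeas s' hs'T)
    have hS1 : MeasurableSet {y : ℝ | x < |y / Real.sqrt (t' - s')|} :=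
      measurableSet_lt measurable_const ((measurable_id.div_const _).abs)
    have heq : {ω | x < |(W t' ω - W s' ω) / Real.sqrt (t' - s')|}
        = (fun ω => W t' ω - W s' ω) ⁻¹' {y | x < |y / Real.sqrt (t' - s')|} := rfl
    rw [heq, ← Measure.map_apply hg hS1, hW_gauss s' t' h0 hlt'.le hT']
    exact gauss_tail_norm (by linarith) hx
  -- Poisson increment step
  have pstep : P ({ω | 0 < N t ω - N (b - δ) ω} ∩ A)
      ≤ P A * ENNReal.ofReal (2 * δ * lamB) := by
    have h0 : 0 ≤ b - δ := hbδ0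
    have hlt' : b - δ < t := by linarith
    have hS : MeasurableSet {p : ℝ × ℝ | 0 < p.2} :=
      measurableSet_lt measurable_const measurable_snd
    have hindep := (Indep_iff _ _ P).mp (h_indep (b - δ) t h0 hlt'.le ht.2)
    have hB : MeasurableSet[MeasurableSpace.comap
        (fun ω => (W t ω - W (b - δ) ω, N t ω - N (b - δ) ω)) inferInstance]
        {ω | 0 < N t ω - N (b - δ) ω} := ⟨{p : ℝ × ℝ | 0 < p.2}, hS, rfl⟩
    rw [hindep _ _ hB (F.mono hsle _ hA), mul_comm]
    gcongr
    have hg : Measurable (fun ω => N t ω - N (b - δ) ω) :=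
      (hNmeas t ht).sub (hNmeas (b - δ) ⟨h0, le_trans hlt'.le ht.2⟩)
    have hS1 : MeasurableSet {y : ℝ | 0 < y} := measurableSet_lt measurable_const measurable_id
    have heq : {ω | 0 < N t ω - N (b - δ) ω}
        = (fun ω => N t ω - N (b - δ) ω) ⁻¹' {y | 0 < y} := rfl
    rw [heq, ← Measure.map_apply hg hS1, hN_poisson (b - δ) t h0 hlt'.le ht.2,
      Measure.map_apply measurable_from_top hS1]
    have hpre : ((fun k : ℕ => (k:ℝ)) ⁻¹' {y | 0 < y}) = {k : ℕ | 0 < k} := by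
      ext k; simp [Nat.cast_pos]
    rw [hpre]
    refine le_trans (poisson_tail _) (ENNReal.ofReal_le_ofReal ?_)
    have hI : ∫ u in (b - δ)..t, lam u ≤ 2 * δ * lamB := by
      have hInt : IntervalIntegrable lam volume (b - δ) t := by
        rw [intervalIntegrable_iff_integrableOn_Ioc_of_le hlt'.le]
        apply Measure.integrableOn_of_bounded (M := lamB) measure_Ioc_lt_top.ne
          hlam_meas.aestronglyMeasurable
        rw [ae_restrict_iff' measurableSet_Ioc]
        refine ae_of_all _ (fun u hu => ?_)
        have huT : u ∈ Set.Icc (0:ℝ) T := ⟨le_trans h0 hu.1.le, le_trans hu.2 ht.2⟩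
        rw [Real.norm_eq_abs, abs_of_pos (hlam_pos u huT)]
        exact hlamB u huT
      calc ∫ u in (b - δ)..t, lam u ≤ ∫ _ in (b - δ)..t, lamB :=
            intervalIntegral.integral_mono_on hlt'.le hInt intervalIntegrable_const
              (fun u hu => hlamB u ⟨le_trans h0 hu.1, le_trans hu.2 ht.2⟩)
        _ = (t - (b - δ)) * lamB := by rw [intervalIntegral.integral_const, smul_eq_mul]
        _ ≤ 2 * δ * lamB := by nlinarith
    rw [Real.coe_toNNReal']
    exact max_le hI (by positivity)
  -- assemble
  set B1 := {ω | x < |(W t ω - W b ω) / Real.sqrt (t - b)|} with hB1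
  set B2 := {ω | x < |(W b ω - W (b - (t - b)) ω) / Real.sqrt (t - b)|} with hB2
  set B3 := {ω | x < |(W (b - (t - b)) ω - W (b - δ) ω) / Real.sqrt (δ - (t - b))|} with hB3
  set B4 := {ω | 0 < N t ω - N (b - δ) ω} with hB4
  have hstep1 : P (B1 ∩ A) ≤ P A * ENNReal.ofReal G :=
    step b t (by linarith) hlt ht.2 (by linarith)
  have hstep2 : P (B2 ∩ A) ≤ P A * ENNReal.ofReal G := by
    have h2 := step (b - (t - b)) b (by linarith) (by linarith) hbT (by linarith)
    rwa [show b - (b - (t - b)) = t - b from by ring] at h2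
  have hstep3 : P (B3 ∩ A) ≤ P A * ENNReal.ofReal G := by
    rcases lt_or_eq_of_le hv_le with hvlt | hveq
    · have h3 := step (b - δ) (b - (t - b)) hbδ0 (by linarith) (by linarith) hsle
      rwa [show b - (t - b) - (b - δ) = δ - (t - b) from by ring] at h3
    · have hB3e : B3 = ∅ := by
        ext ω
        simp only [hB3, Set.mem_setOf_eq, Set.mem_empty_iff_false, iff_false, not_lt]
        rw [show δ - (t - b) = 0 from by linarith, Real.sqrt_zero, div_zero, abs_zero]
        exact hx.le
      rw [hB3e, Set.empty_inter]
      simp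
  have hsub : A ∩ (B4 ∪ {ω | x < max (max
        |(W t ω - W b ω) / Real.sqrt (t - b)|
        |(W b ω - W (b - (t - b)) ω) / Real.sqrt (t - b)|)
        |(W (b - (t - b)) ω - W (b - δ) ω) / Real.sqrt (δ - (t - b))|})
      ⊆ ((B1 ∩ A) ∪ (B2 ∩ A)) ∪ ((B3 ∩ A) ∪ (B4 ∩ A)) := by
    rintro ω ⟨hA', h⟩
    rcases h with h | h
    · exact Or.inr (Or.inr ⟨h, hA'⟩)
    · simp only [Set.mem_setOf_eq, lt_max_iff] at h
      rcases h with (h | h) | h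
      exacts [Or.inl (Or.inl ⟨h, hA'⟩), Or.inl (Or.inr ⟨h, hA'⟩), Or.inr (Or.inl ⟨h, hA'⟩)]
  calc P (A ∩ (B4 ∪ _)) ≤ P (((B1 ∩ A) ∪ (B2 ∩ A)) ∪ ((B3 ∩ A) ∪ (B4 ∩ A))) :=
        measure_mono hsub
    _ ≤ (P (B1 ∩ A) + P (B2 ∩ A)) + (P (B3 ∩ A) + P (B4 ∩ A)) :=
        le_trans (measure_union_le _ _) (add_le_add (measure_union_le _ _) (measure_union_le _ _))
    _ ≤ (P A * ENNReal.ofReal G + P A * ENNReal.ofReal G)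
        + (P A * ENNReal.ofReal G + P A * ENNReal.ofReal (2 * δ * lamB)) :=
        add_le_add (add_le_add hstep1 hstep2) (add_le_add hstep3 pstep)
    _ = P A * ((ENNReal.ofReal G + ENNReal.ofReal G)
        + (ENNReal.ofReal G + ENNReal.ofReal (2 * δ * lamB))) := by
        rw [← mul_add, ← mul_add, ← mul_add]
    _ = P A * ENNReal.ofReal (3 * δ / (T * Real.sqrt (Real.pi * L)) + 2 * δ * lamB) := by
        congr 1
        rw [← ENNReal.ofReal_add hG0 hG0, ← ENNReal.ofReal_add hG0 h2δ,
          ← ENNReal.ofReal_add (add_nonneg hG0 hG0) (add_nonneg hG0 h2δ)]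
        congr 1
        rw [hG]
        ring
end
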